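/- arXiv:2502.17966 — 2 statements merged into one kernel-verified Lean document; each statement's English description precedes it below -/
import Mathlib

section
/- Define x_{n+1} = x_n + y_n, y_{n+1} = y_n + 3x_n with x_0 = y_0 = 1, and r_n = y_n/x_n. Then r_n converges to √3. -/
theorem theon_sqrt3_tendsto (x y : ℕ → ℕ) (hx0 : x 0 = 1) (hy0 : y 0 = 1)
    (hx : ∀ n, x (n + 1) = x n + y n) (hy : ∀ n, y (n + 1) = y n + 3 * x n) :
    Filter.Tendsto (fun n => (y n : ℝ) / (x n : ℝ)) Filter.atTop
      (nhds (Real.sqrt 3)) := by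
  have hxy : ∀ n, x n ≤ y n := by
    intro n; induction n with
    | zero => simp [hx0, hy0]
    | succ n ih => rw [hx, hy]; omega
  have hxpos : ∀ n, 1 ≤ x n := by
    intro n; induction n with
    | zero => simp [hx0]
    | succ n ih => rw [hx]; omega
  have hpow : ∀ n, 2 ^ n ≤ x n := by
    intro n; induction n with
    | zero => simp [hx0]
    | succ n ih =>
      rw [hx, pow_succ]
      have := hxy n
      omega
  have hd : ∀ n, (y n : ℤ) ^ 2 - 3 * (x n : ℤ) ^ 2 = (-2) ^ (n + 1) := by
    intro n; induction n with
    | zero => simp [hx0, hy0]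
    | succ n ih =>
      rw [hx, hy]
      push_cast
      linear_combination (-2 : ℤ) * ih
  have hs3 : (Real.sqrt 3) ^ 2 = 3 := Real.sq_sqrt (by norm_num)
  have hsp : 1 ≤ Real.sqrt 3 := by
    rw [show (1 : ℝ) = Real.sqrt 1 by simp]
    exact Real.sqrt_le_sqrt (by norm_num)
  have key : ∀ n, ‖(y n : ℝ) / (x n : ℝ) - Real.sqrt 3‖ ≤ 2 * (1 / 2) ^ n := by
    intro n
    have hxp : (0 : ℝ) < x n := by exact_mod_cast hxpos n
    set r := (y n : ℝ) / (x n : ℝ) with hr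
    have hr0 : 0 ≤ r := by positivity
    have hdr : (y n : ℝ) ^ 2 - 3 * (x n : ℝ) ^ 2 = (-2) ^ (n + 1) := by
      exact_mod_cast hd n
    have hd' : r ^ 2 - 3 = (-2 : ℝ) ^ (n + 1) / (x n : ℝ) ^ 2 := by
      rw [hr]
      field_simp
      linarith [hdr]
    have h1 : |r - Real.sqrt 3| ≤ |r ^ 2 - 3| := by
      have heq : |r ^ 2 - 3| = |r - Real.sqrt 3| * (r + Real.sqrt 3) := by
        rw [← abs_of_nonneg (by positivity : (0 : ℝ) ≤ r + Real.sqrt 3), ← abs_mul]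
        congr 1
        linear_combination hs3
      rw [heq]
      nlinarith [abs_nonneg (r - Real.sqrt 3)]
    have h2 : |r ^ 2 - 3| = 2 ^ (n + 1) / (x n : ℝ) ^ 2 := by
      rw [hd', abs_div, abs_pow, abs_neg, abs_of_nonneg (by norm_num : (0:ℝ) ≤ 2),
        abs_of_pos (by positivity : (0:ℝ) < (x n : ℝ) ^ 2)]
    have hx2 : (2 : ℝ) ^ n ≤ (x n : ℝ) := by exact_mod_cast hpow n
    have h3 : (2 : ℝ) ^ (n + 1) / (x n : ℝ) ^ 2 ≤ 2 * (1 / 2) ^ n := by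
      have heq : (2 : ℝ) * (1 / 2) ^ n = 2 ^ (n + 1) / ((2 : ℝ) ^ n) ^ 2 := by
        rw [eq_div_iff (by positivity)]
        field_simp
        have h : (1 / 2 : ℝ) ^ n * 2 ^ n = 1 := by rw [← mul_pow]; norm_num
        linear_combination (2 ^ n * 2 : ℝ) * h
      rw [heq]
      gcongr
    calc ‖r - Real.sqrt 3‖ = |r - Real.sqrt 3| := rfl
      _ ≤ |r ^ 2 - 3| := h1
      _ = 2 ^ (n + 1) / (x n : ℝ) ^ 2 := h2
      _ ≤ 2 * (1 / 2) ^ n := h3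
  have hg : Filter.Tendsto (fun n => 2 * (1 / 2 : ℝ) ^ n) Filter.atTop (nhds 0) := by
    have := (tendsto_pow_atTop_nhds_zero_of_lt_one (by norm_num : (0:ℝ) ≤ 1/2)
      (by norm_num : (1/2 : ℝ) < 1)).const_mul 2
    simpa using this
  have := squeeze_zero_norm key hg
  rwa [tendsto_sub_nhds_zero_iff] at this
end

section
/- With r_0 = 1 and r_{n+1} = (r_n + 3)/(r_n + 1), for all n we have |r_n - √3| ≤ (1/2)^n * (√3 - 1). -/
theorem theon_sqrt3_error_bound (r : ℕ → ℝ) (h0 : r 0 = 1)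
    (hr : ∀ n, r (n + 1) = (r n + 3) / (r n + 1)) :
    ∀ n, |r n - Real.sqrt 3| ≤ (1 / 2 : ℝ) ^ n * (Real.sqrt 3 - 1) := by
  set s := Real.sqrt 3 with hsdef
  have hs3 : s ^ 2 = 3 := Real.sq_sqrt (by norm_num)
  have hs1 : 1 < s := by
    nlinarith [Real.sqrt_nonneg 3]
  have hs2 : s < 2 := by
    nlinarith [Real.sqrt_nonneg 3]
  have hge : ∀ n, 1 ≤ r n := by
    intro n
    induction n with
    | zero => rw [h0]
    | succ n ih =>
      rw [hr]
      rw [le_div_iff₀ (by linarith)]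
      linarith
  intro n
  induction n with
  | zero =>
    rw [h0, abs_of_nonpos (by linarith)]
    simp
  | succ n ih =>
    have hrn := hge n
    have hd : (0:ℝ) < r n + 1 := by linarith
    have heq : r (n + 1) - s = (s - 1) * (s - r n) / (r n + 1) := by
      rw [hr]
      field_simp
      nlinarith [hs3]
    rw [heq, abs_div, abs_of_pos hd, abs_mul, abs_of_nonneg (by linarith : (0:ℝ) ≤ s - 1),
      abs_sub_comm]
    have hfac : (s - 1) / (r n + 1) ≤ 1 / 2 := by
      rw [div_le_div_iff₀ hd (by norm_num)]
      linarith
    have habs : |r n - s| ≤ (1/2:ℝ)^n * (s - 1) := ih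
    calc (s - 1) * |r n - s| / (r n + 1)
        = (s - 1) / (r n + 1) * |r n - s| := by ring
      _ ≤ 1 / 2 * ((1/2:ℝ)^n * (s - 1)) :=
          mul_le_mul hfac habs (abs_nonneg _) (by norm_num)
      _ = (1/2:ℝ)^(n+1) * (s - 1) := by ring
end
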